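/- Let μ be a (σ-finite) measure on [0, ∞) with ∫ t dμ(t) < ∞, and suppose ∫_{[1,∞)} t·log t dμ(t) = +∞ while ∫_{(0,1)} t·log t dμ(t) > −∞. Then lim_{M→∞} ∫ t·log((M·t+1)/(M+t)) dμ(t) = +∞. -/

import Mathlib

open MeasureTheory Filter
open scoped ENNReal Topology

/-- The extended-real-valued integral of a real function: the difference (in `EReal`)
of the lower integrals of the positive and negative parts. -/
noncomputable def eIntegral (μ : Measure ℝ) (f : ℝ → ℝ) : EReal :=
  ((∫⁻ t, ENNReal.ofReal (f t) ∂μ : ℝ≥0∞) : EReal) -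
    ((∫⁻ t, ENNReal.ofReal (-f t) ∂μ : ℝ≥0∞) : EReal)

private lemma ratio_pos {M t : ℝ} (hM : 1 ≤ M) (ht : 0 < t) : 0 < (M * t + 1) / (M + t) :=
  div_pos (by nlinarith) (by linarith)

private lemma ratio_ge {M t : ℝ} (hM : 1 ≤ M) (ht : 0 < t) (ht1 : t ≤ 1) :
    t ≤ (M * t + 1) / (M + t) := by
  rw [le_div_iff₀ (by linarith)]
  nlinarith

private lemma ratio_ge_one {M t : ℝ} (hM : 1 ≤ M) (ht : 1 ≤ t) :
    1 ≤ (M * t + 1) / (M + t) := by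
  rw [le_div_iff₀ (by linarith)]
  nlinarith

private lemma fM_mono {t : ℝ} (ht : 1 ≤ t) {M M' : ℝ} (hM : 1 ≤ M) (hMM' : M ≤ M') :
    t * Real.log ((M * t + 1) / (M + t)) ≤ t * Real.log ((M' * t + 1) / (M' + t)) := by
  apply mul_le_mul_of_nonneg_left _ (by linarith : (0:ℝ) ≤ t)
  apply Real.log_le_log (ratio_pos hM (by linarith))
  rw [div_le_div_iff₀ (by linarith) (by linarith)]
  have h := mul_nonneg (sub_nonneg.2 hMM') (sub_nonneg.2 (by nlinarith : (1:ℝ) ≤ t ^ 2))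
  nlinarith [h]

private lemma ratio_tendsto (t : ℝ) :
    Tendsto (fun M : ℝ => (M * t + 1) / (M + t)) atTop (𝓝 t) := by
  have h : ∀ᶠ M in atTop, (M * t + 1) / (M + t) = (t + 1 / M) / (1 + t / M) := by
    filter_upwards [eventually_gt_atTop (max 0 (-t))] with M hM
    have h1 : 0 < M := lt_of_le_of_lt (le_max_left _ _) hM
    have h2 : 0 < M + t := by
      have := lt_of_le_of_lt (le_max_right 0 (-t)) hM; linarith
    field_simp
  rw [tendsto_congr' h]
  have hinv : Tendsto (fun M : ℝ => 1 / M) atTop (𝓝 0) := by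
    simpa [one_div] using (tendsto_inv_atTop_zero : Tendsto (fun M : ℝ => M⁻¹) atTop (𝓝 0))
  have h1 : Tendsto (fun M : ℝ => t + 1 / M) atTop (𝓝 (t + 0)) :=
    tendsto_const_nhds.add hinv
  have h2 : Tendsto (fun M : ℝ => 1 + t / M) atTop (𝓝 (1 + 0)) := by
    apply tendsto_const_nhds.add
    have h3 := (tendsto_inv_atTop_zero : Tendsto (fun M : ℝ => M⁻¹) atTop (𝓝 0)).const_mul t
    rw [mul_zero] at h3
    exact h3.congr (fun M => (div_eq_mul_inv t M).symm)
  have h4 := h1.div h2 (by norm_num)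
  rw [add_zero, add_zero, div_one] at h4
  exact h4

private lemma ereal_aux {a b : ℝ≥0∞} {x : ℝ} (hb : b ≠ ⊤)
    (h : ENNReal.ofReal (x + b.toReal) < a) :
    (x : EReal) < (a : EReal) - (b : EReal) := by
  rcases eq_or_ne a ⊤ with ha | ha
  · subst ha
    have hbe : ((b : EReal)) = ((b.toReal : ℝ) : EReal) := by
      rw [← EReal.coe_toReal (x := (b : EReal))]
      · rw [EReal.toReal_coe_ennreal]
      · simpa [EReal.coe_ennreal_eq_top_iff] using hb
      · exact EReal.coe_ennreal_ne_bot b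
    rw [EReal.coe_ennreal_top, hbe, EReal.top_sub_coe]
    exact EReal.coe_lt_top x
  · have hx : x + b.toReal < a.toReal := by
      rcases le_or_gt 0 (x + b.toReal) with h0 | h0
      · exact (ENNReal.ofReal_lt_iff_lt_toReal h0 ha).1 h
      · have : 0 < a := lt_of_le_of_lt zero_le h
        have := ENNReal.toReal_pos this.ne' ha
        linarith
    have hae : ((a : EReal)) = ((a.toReal : ℝ) : EReal) := by
      rw [← EReal.coe_toReal (x := (a : EReal))]
      · rw [EReal.toReal_coe_ennreal]
      · simpa [EReal.coe_ennreal_eq_top_iff] using ha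
      · exact EReal.coe_ennreal_ne_bot a
    have hbe : ((b : EReal)) = ((b.toReal : ℝ) : EReal) := by
      rw [← EReal.coe_toReal (x := (b : EReal))]
      · rw [EReal.toReal_coe_ennreal]
      · simpa [EReal.coe_ennreal_eq_top_iff] using hb
      · exact EReal.coe_ennreal_ne_bot b
    rw [hae, hbe, ← EReal.coe_sub]
    exact_mod_cast by linarith

theorem stmt_5 (μ : Measure ℝ) (hsupp : μ (Set.Iio 0) = 0)
    (hint : ∫⁻ t, ENNReal.ofReal t ∂μ < ⊤)
    (htop : ∫⁻ t in Set.Ici (1 : ℝ), ENNReal.ofReal (t * Real.log t) ∂μ = ⊤)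
    (hneg : ∫⁻ t in Set.Ioo (0 : ℝ) 1, ENNReal.ofReal (-(t * Real.log t)) ∂μ < ⊤) :
    Tendsto (fun M : ℝ => eIntegral μ (fun t => t * Real.log ((M * t + 1) / (M + t))))
      atTop (nhds ⊤) := by
  set C := ∫⁻ t in Set.Ioo (0 : ℝ) 1, ENNReal.ofReal (-(t * Real.log t)) ∂μ with hCdef
  have hCne : C ≠ ⊤ := hneg.ne
  have hmeas : ∀ M : ℝ,
      Measurable fun t : ℝ => ENNReal.ofReal (t * Real.log ((M * t + 1) / (M + t))) := by
    intro M
    apply ENNReal.measurable_ofReal.comp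
    exact measurable_id.mul (Real.measurable_log.comp
      (((measurable_const.mul measurable_id).add measurable_const).div
        (measurable_const.add measurable_id)))
  have hae : ∀ᵐ t ∂μ, 0 ≤ t := by
    rw [ae_iff]
    simpa [Set.Iio, not_le] using hsupp
  -- negative part bound
  have hNeg : ∀ M : ℝ, 1 ≤ M →
      ∫⁻ t, ENNReal.ofReal (-(t * Real.log ((M * t + 1) / (M + t)))) ∂μ ≤ C := by
    intro M hM
    have hptwise : ∀ᵐ t ∂μ, ENNReal.ofReal (-(t * Real.log ((M * t + 1) / (M + t)))) ≤
        (Set.Ioo (0 : ℝ) 1).indicator (fun t => ENNReal.ofReal (-(t * Real.log t))) t := by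
      filter_upwards [hae] with t ht
      rcases lt_or_ge t 1 with ht1 | ht1
      · rcases eq_or_lt_of_le ht with h0 | h0
        · simp [← h0]
        · rw [Set.indicator_of_mem (show t ∈ Set.Ioo (0:ℝ) 1 from ⟨h0, ht1⟩)]
          apply ENNReal.ofReal_le_ofReal
          have hlog : Real.log t ≤ Real.log ((M * t + 1) / (M + t)) :=
            Real.log_le_log h0 (ratio_ge hM h0 ht1.le)
          nlinarith
      · have hnn : 0 ≤ t * Real.log ((M * t + 1) / (M + t)) :=
          mul_nonneg (by linarith) (Real.log_nonneg (ratio_ge_one hM ht1))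
        have hz : ENNReal.ofReal (-(t * Real.log ((M * t + 1) / (M + t)))) = 0 :=
          ENNReal.ofReal_eq_zero.2 (by linarith)
        rw [hz]
        exact zero_le
    calc ∫⁻ t, ENNReal.ofReal (-(t * Real.log ((M * t + 1) / (M + t)))) ∂μ
        ≤ ∫⁻ t, (Set.Ioo (0 : ℝ) 1).indicator
            (fun t => ENNReal.ofReal (-(t * Real.log t))) t ∂μ := lintegral_mono_ae hptwise
      _ = C := by rw [lintegral_indicator measurableSet_Ioo]
  -- positive part tends to ⊤ along the sequence M = n + 1
  have hPos : Tendsto (fun n : ℕ => ∫⁻ t in Set.Ici (1 : ℝ),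
      ENNReal.ofReal (t * Real.log ((((n : ℝ) + 1) * t + 1) / (((n : ℝ) + 1) + t))) ∂μ)
      atTop (𝓝 ⊤) := by
    rw [← htop]
    apply lintegral_tendsto_of_tendsto_of_monotone
    · intro n; exact (hmeas _).aemeasurable
    · refine (ae_restrict_iff' measurableSet_Ici).2 (ae_of_all _ fun t ht => ?_)
      intro n m hnm
      apply ENNReal.ofReal_le_ofReal
      have hc : (n : ℝ) ≤ (m : ℝ) := by exact_mod_cast hnm
      exact fM_mono ht (by linarith [Nat.cast_nonneg (α := ℝ) n]) (by linarith)
    · refine (ae_restrict_iff' measurableSet_Ici).2 (ae_of_all _ fun t ht => ?_)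
      have ht0 : (0 : ℝ) < t := by linarith [Set.mem_Ici.1 ht]
      have h1 : Tendsto (fun M : ℝ => ENNReal.ofReal (t * Real.log ((M * t + 1) / (M + t))))
          atTop (𝓝 (ENNReal.ofReal (t * Real.log t))) := by
        apply (ENNReal.continuous_ofReal.tendsto _).comp
        exact tendsto_const_nhds.mul
          (((Real.continuousAt_log ht0.ne').tendsto).comp (ratio_tendsto t))
      have h2 : Tendsto (fun n : ℕ => (n : ℝ) + 1) atTop atTop :=
        tendsto_atTop_add_const_right _ 1 tendsto_natCast_atTop_atTop
      exact h1.comp h2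
  -- main argument
  rw [EReal.tendsto_nhds_top_iff_real]
  intro x
  have hK : ENNReal.ofReal (x + C.toReal) < ⊤ := ENNReal.ofReal_lt_top
  obtain ⟨n₀, hn₀⟩ := (hPos.eventually (Ioi_mem_nhds hK)).exists
  filter_upwards [eventually_ge_atTop ((n₀ : ℝ) + 1), eventually_ge_atTop (1 : ℝ)]
    with M hMn hM1
  set a := ∫⁻ t, ENNReal.ofReal (t * Real.log ((M * t + 1) / (M + t))) ∂μ with hadef
  set b := ∫⁻ t, ENNReal.ofReal (-(t * Real.log ((M * t + 1) / (M + t)))) ∂μ with hbdef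
  have hbC : b ≤ C := hNeg M hM1
  have hge : ∫⁻ t in Set.Ici (1 : ℝ),
      ENNReal.ofReal (t * Real.log ((((n₀ : ℝ) + 1) * t + 1) / (((n₀ : ℝ) + 1) + t))) ∂μ
      ≤ a := by
    refine le_trans (lintegral_mono_ae ?_) (setLIntegral_le_lintegral _ _)
    refine (ae_restrict_iff' measurableSet_Ici).2 (ae_of_all _ fun t ht => ?_)
    exact ENNReal.ofReal_le_ofReal (fM_mono ht (by linarith [Nat.cast_nonneg (α := ℝ) n₀]) hMn)
  have ha : ENNReal.ofReal (x + b.toReal) < a := by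
    refine lt_of_le_of_lt ?_ (lt_of_lt_of_le hn₀ hge)
    apply ENNReal.ofReal_le_ofReal
    have : b.toReal ≤ C.toReal := ENNReal.toReal_mono hCne hbC
    linarith
  have := ereal_aux (lt_of_le_of_lt hbC hneg).ne ha
  simpa [eIntegral, ← hadef, ← hbdef] using this
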